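/- arXiv:1511.09440 — 3 statements merged into one kernel-verified Lean document; each statement's English description precedes it below -/
import Mathlib

section
/- Let p, q be polynomials with complex coefficients such that q ≠ 0, every complex root z of q satisfies |z| < 1, and deg p < deg q. Then p + q ≠ 0 and (1/(2π)) ∫_{0}^{2π} log |1 + p(e^{iθ})/q(e^{iθ})| dθ = Σ_{z} log |z|, where the sum ranges over the multiset of complex roots z of the polynomial p + q that satisfy |z| > 1 (counted with multiplicity). -/
open Real MeasureTheory intervalIntegral Set
open Polynomial


noncomputable def cE (θ : ℝ) : ℂ := Complex.exp (θ * Complex.I)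

lemma abs_cE (θ : ℝ) : ‖cE θ‖ = 1 := Complex.norm_exp_ofReal_mul_I θ

lemma cE_ne_zero (θ : ℝ) : cE θ ≠ 0 := Complex.exp_ne_zero _

lemma cE_add (a b : ℝ) : cE (a + b) = cE a * cE b := by
  rw [cE, cE, cE, ← Complex.exp_add]; push_cast; ring_nf

lemma cE_periodic : Function.Periodic cE (2 * π) := by
  intro θ; rw [cE_add]
  have : cE (2 * π) = 1 := by
    rw [cE]; push_cast; exact Complex.exp_two_pi_mul_I
  rw [this, mul_one]

lemma cE_mul_conj (θ : ℝ) : cE θ * (starRingEnd ℂ) (cE θ) = 1 := by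
  rw [Complex.mul_conj]
  norm_cast
  rw [← Complex.sq_norm, abs_cE]; norm_num

lemma countable_cE_eq (z : ℂ) : Set.Countable {θ : ℝ | cE θ = z} := by
  rcases Set.eq_empty_or_nonempty {θ : ℝ | cE θ = z} with h | ⟨θ₀, hθ₀⟩
  · simp [h]
  · simp only [mem_setOf_eq] at hθ₀
    apply Set.Countable.mono _ (Set.countable_range fun n : ℤ => θ₀ + n * (2 * π))
    intro θ hθ
    simp only [mem_setOf_eq] at hθ
    have h1 : Complex.exp (((θ - θ₀ : ℝ) : ℂ) * Complex.I) = 1 := by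
      have : cE θ = cE θ₀ := by rw [hθ, hθ₀]
      have h2 := congrArg (· * (cE θ₀)⁻¹) this
      simp only [mul_inv_cancel₀ (cE_ne_zero θ₀)] at h2
      rw [← h2, cE, cE, ← Complex.exp_neg, ← Complex.exp_add]
      push_cast; ring_nf
    rw [Complex.exp_eq_one_iff] at h1
    obtain ⟨n, hn⟩ := h1
    refine ⟨n, ?_⟩
    have h3 : ((θ - θ₀ : ℝ) : ℂ) * Complex.I = ((n : ℝ) * (2 * π) : ℝ) * Complex.I := by
      rw [hn]; push_cast; ring
    have h4 := mul_right_cancel₀ Complex.I_ne_zero h3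
    have h5 : θ - θ₀ = (n : ℝ) * (2 * π) := by exact_mod_cast h4
    show θ₀ + (n : ℝ) * (2 * π) = θ
    linarith



lemma continuous_cE : Continuous cE :=
  Complex.continuous_exp.comp (Complex.continuous_ofReal.mul continuous_const)

lemma cE_re (θ : ℝ) : (cE θ).re = Real.cos θ := by
  rw [cE, Complex.exp_ofReal_mul_I_re]

lemma cE_neg (θ : ℝ) : cE (-θ) = (starRingEnd ℂ) (cE θ) := by
  rw [cE, cE, ← Complex.exp_conj]
  congr 1
  simp [Complex.conj_I]

noncomputable def gg (θ : ℝ) : ℝ := Real.log (‖cE θ - 1‖)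

lemma gg_neg (θ : ℝ) : gg (-θ) = gg θ := by
  unfold gg
  rw [cE_neg]
  rw [show (starRingEnd ℂ) (cE θ) - 1 = (starRingEnd ℂ) (cE θ - 1) by rw [map_sub, map_one]]
  rw [Complex.norm_conj]

lemma gg_per : Function.Periodic gg (2 * π) := fun θ => by
  unfold gg; rw [cE_periodic θ]

lemma gg_meas : Measurable gg :=
  Real.measurable_log.comp (continuous_norm.comp
    ((continuous_cE.sub continuous_const))).measurable

lemma abs_cE_sub_one_le (θ : ℝ) : ‖cE θ - 1‖ ≤ 2 := by
  calc ‖cE θ - 1‖ ≤ ‖cE θ‖ + ‖(1:ℂ)‖ := by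
        exact norm_sub_le _ _
    _ = 2 := by rw [abs_cE]; simp; norm_num

lemma abs_cE_sub_one_ge {θ : ℝ} (h : |θ| ≤ π) : 2 / π ^ 2 * θ ^ 2 ≤ ‖cE θ - 1‖ := by
  have h1 : Real.cos θ ≤ 1 - 2 / π ^ 2 * θ ^ 2 := Real.cos_le_one_sub_mul_cos_sq h
  have h2 : |(cE θ - 1).re| ≤ ‖cE θ - 1‖ := Complex.abs_re_le_norm _
  have h3 : (cE θ - 1).re = Real.cos θ - 1 := by
    rw [Complex.sub_re, cE_re, Complex.one_re]
  rw [h3] at h2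
  have : 2 / π ^ 2 * θ ^ 2 ≤ 1 - Real.cos θ := by linarith
  calc 2 / π ^ 2 * θ ^ 2 ≤ 1 - Real.cos θ := this
    _ ≤ |Real.cos θ - 1| := by rw [abs_sub_comm]; exact le_abs_self _
    _ ≤ _ := h2

lemma log_intable : IntervalIntegrable Real.log volume 0 π := by
  have h1 : IntervalIntegrable Real.log volume 0 1 := by
    have key : IntervalIntegrable (fun x => -Real.log x) volume 0 1 := by
      apply intervalIntegrable_deriv_of_nonneg (g := fun x => x - x * Real.log x)
      · exact (continuous_id.sub Real.continuous_mul_log).continuousOn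
      · intro x hx
        simp only [min_def, max_def] at hx
        norm_num at hx
        have h := (hasDerivAt_id x).sub (Real.hasDerivAt_mul_log (ne_of_gt hx.1))
        have : -Real.log x = 1 - (Real.log x + 1) := by ring
        rw [this]
        exact h
      · intro x hx
        simp only [min_def, max_def] at hx
        norm_num at hx
        simp only [Left.nonneg_neg_iff]
        exact Real.log_nonpos hx.1.le hx.2.le
    have := key.neg
    have heq : (-fun x => -Real.log x) = Real.log := by funext x; simp
    rwa [heq] at this
  have h2 : IntervalIntegrable Real.log volume 1 π := by
    apply intervalIntegrable_log
    intro h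
    rw [Set.mem_uIcc] at h
    have := Real.pi_pos
    rcases h with ⟨h, _⟩ | ⟨_, h⟩ <;> linarith
  exact h1.trans h2

lemma gg_bound {θ : ℝ} (h0 : 0 < θ) (hπ : θ ≤ π) : |gg θ| ≤ 2 * |Real.log θ| + 8 := by
  have hπpos := Real.pi_pos
  have habs : 2 / π ^ 2 * θ ^ 2 ≤ ‖cE θ - 1‖ :=
    abs_cE_sub_one_ge (by rw [abs_of_pos h0]; exact hπ)
  have hpos : (0:ℝ) < 2 / π ^ 2 * θ ^ 2 := by positivity
  have hL : Real.log (2 / π ^ 2 * θ ^ 2) ≤ gg θ := Real.log_le_log hpos habs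
  have hU : gg θ ≤ Real.log 2 := by
    rcases eq_or_lt_of_le (norm_nonneg (cE θ - 1)) with h | h
    · unfold gg; rw [← h, Real.log_zero]; exact (Real.log_pos one_lt_two).le
    · exact Real.log_le_log h (abs_cE_sub_one_le θ)
  have hexp : Real.log (2 / π ^ 2 * θ ^ 2) = Real.log 2 - 2 * Real.log π + 2 * Real.log θ := by
    rw [Real.log_mul (by positivity) (by positivity), Real.log_div (by norm_num) (by positivity),
      Real.log_pow, Real.log_pow]
    push_cast; ring
  have h2 : Real.log 2 ≤ 1 := by
    have := Real.log_le_sub_one_of_pos (by norm_num : (0:ℝ) < 2); linarith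
  have h2' : 0 ≤ Real.log 2 := Real.log_nonneg one_le_two
  have hp1 : 0 ≤ Real.log π := Real.log_nonneg (by linarith [Real.two_le_pi])
  have hp2 : Real.log π ≤ π - 1 := Real.log_le_sub_one_of_pos hπpos
  have hpi4 : π ≤ 4 := Real.pi_le_four
  have hna := neg_abs_le (Real.log θ)
  have hla := le_abs_self (Real.log θ)
  have hab0 := abs_nonneg (Real.log θ)
  rw [hexp] at hL
  rw [abs_le]
  constructor <;> nlinarith

lemma gg_int_0pi : IntervalIntegrable gg volume 0 π := by
  have hM : IntervalIntegrable (fun θ => 2 * |Real.log θ| + 8) volume 0 π :=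
    ((log_intable.abs.const_mul 2).add (intervalIntegrable_const))
  rw [intervalIntegrable_iff_integrableOn_Ioc_of_le Real.pi_pos.le] at hM ⊢
  apply hM.mono' (gg_meas.aestronglyMeasurable.restrict)
  rw [ae_restrict_iff' measurableSet_Ioc]
  filter_upwards with x hx
  rw [Real.norm_eq_abs]
  exact gg_bound hx.1 hx.2

lemma gg_int_neg : IntervalIntegrable gg volume (-π) 0 := by
  have h := (IntervalIntegrable.iff_comp_neg).mp gg_int_0pi
  have heq : (fun x => gg (-x)) = gg := funext gg_neg
  rw [heq] at h
  simpa using h.symm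

lemma gg_int_pi2pi : IntervalIntegrable gg volume π (2*π) := by
  have h := gg_int_neg.comp_sub_right (2*π)
  have heq : (fun x => gg (x - 2*π)) = gg := funext fun x => gg_per.sub_eq x
  rw [heq] at h
  have e1 : -π + 2*π = π := by ring
  have e2 : (0:ℝ) + 2*π = 2*π := by ring
  rwa [e1, e2] at h

lemma gg_int_02pi : IntervalIntegrable gg volume 0 (2*π) := gg_int_0pi.trans gg_int_pi2pi

lemma gg_int_per (k : ℤ) : IntervalIntegrable gg volume (2*π*k) (2*π*k + 2*π) := by
  have h := gg_int_02pi.comp_sub_right (2*π*k)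
  have heq : (fun x => gg (x - 2*π*k)) = gg := funext fun x => by
    rw [show x - 2*π*k = x - (k:ℝ) * (2*π) by ring]
    exact gg_per.sub_int_mul_eq k
  rw [heq] at h
  have e1 : (0:ℝ) + 2*π*k = 2*π*k := by ring
  have e2 : 2*π + 2*π*k = 2*π*k + 2*π := by ring
  rwa [e1, e2] at h

lemma gg_int_shift (a : ℝ) : IntervalIntegrable gg volume a (a + 2*π) := by
  have hπ := Real.pi_pos
  set k : ℤ := ⌊a / (2*π)⌋ with hk
  have hk1 : 2*π*k ≤ a := by
    have := Int.floor_le (a / (2*π))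
    rw [← hk] at this
    calc 2*π*(k:ℝ) = (k:ℝ) * (2*π) := by ring
      _ ≤ a / (2*π) * (2*π) := by gcongr ?_ * _
      _ = a := by field_simp
  have hk2 : a < 2*π*(k+1) := by
    have := Int.lt_floor_add_one (a / (2*π))
    rw [← hk] at this
    calc a = a / (2*π) * (2*π) := by field_simp
      _ < ((k:ℝ)+1) * (2*π) := by gcongr ?_ * _
      _ = 2*π*((k:ℝ)+1) := by ring
  have big : IntervalIntegrable gg volume (2*π*k) (2*π*k + 2*π + 2*π) := by
    have h2 := gg_int_per (k+1)
    have e : 2*π*((k:ℤ):ℝ) + 2*π = 2*π*((k+1 : ℤ):ℝ) := by push_cast; ring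
    refine (gg_int_per k).trans ?_
    rw [e]
    exact h2
  apply big.mono_set
  rw [Set.uIcc_of_le (by linarith), Set.uIcc_of_le (by linarith)]
  apply Set.Icc_subset_Icc <;> push_cast at hk1 hk2 ⊢ <;> linarith



lemma meanvalue {a : ℂ} (ha : ‖a‖ < 1) :
    ∫ θ in (0:ℝ)..(2*π), Real.log (‖cE θ - a‖) = 0 := by
  set b := (starRingEnd ℂ) a with hb
  have hbabs : ‖b‖ = ‖a‖ := Complex.norm_conj a
  set f : ℂ → ℂ := fun z => Complex.log (1 - b * z) with hf
  have hre : ∀ z : ℂ, ‖z‖ ≤ 1 → 0 < (1 - b * z).re := by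
    intro z hz
    have h1 : ‖b * z‖ < 1 := by
      rw [norm_mul, hbabs]
      nlinarith [norm_nonneg a, norm_nonneg z]
    have h2 : (b * z).re ≤ ‖b * z‖ := Complex.re_le_norm _
    have h3 : (1 - b * z).re = 1 - (b * z).re := by
      rw [Complex.sub_re, Complex.one_re]
    rw [h3]; linarith
  have habsz : ∀ z : ℂ, z ∈ Metric.closedBall (0:ℂ) 1 → ‖z‖ ≤ 1 := by
    intro z hz
    rwa [Metric.mem_closedBall, Complex.dist_eq, sub_zero] at hz
  have hdiff : ∀ z ∈ Metric.closedBall (0:ℂ) 1, DifferentiableAt ℂ f z := by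
    intro z hz
    exact (((differentiable_const (1:ℂ)).sub
      ((differentiable_const b).mul differentiable_id)) z).clog
      (Complex.mem_slitPlane_iff.mpr (Or.inl (hre z (habsz z hz))))
  have hc : ContinuousOn f (Metric.closedBall 0 1) :=
    fun z hz => (hdiff z hz).continuousAt.continuousWithinAt
  have hcauchy := Complex.circleIntegral_sub_inv_smul_of_differentiable_on_off_countable
    (s := ∅) Set.countable_empty (Metric.mem_ball_self one_pos) hc
    (fun x hx => hdiff x (Metric.ball_subset_closedBall hx.1))
  have hf0 : f 0 = 0 := by simp [hf]
  rw [hf0, smul_zero] at hcauchy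
  have hmap : ∀ θ : ℝ, circleMap 0 1 θ = cE θ := fun θ => by
    simp [circleMap, cE]
  rw [circleIntegral] at hcauchy
  have hint : ∫ θ in (0:ℝ)..(2*π), Complex.I * f (cE θ) = 0 := by
    rw [← hcauchy]
    apply intervalIntegral.integral_congr
    intro θ _
    show Complex.I * f (cE θ) = deriv (circleMap 0 1) θ • (circleMap 0 1 θ - 0)⁻¹ • f (circleMap 0 1 θ)
    rw [deriv_circleMap, hmap θ, smul_eq_mul, smul_eq_mul, sub_zero]
    field_simp [cE_ne_zero θ]
  have h2 : Complex.I * ∫ θ in (0:ℝ)..(2*π), f (cE θ) = 0 := by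
    rw [← intervalIntegral.integral_const_mul]; exact hint
  have h3 : ∫ θ in (0:ℝ)..(2*π), f (cE θ) = 0 := by
    rcases mul_eq_zero.mp h2 with h | h
    · exact absurd h Complex.I_ne_zero
    · exact h
  have hcont : Continuous fun θ : ℝ => f (cE θ) := by
    refine Continuous.clog (continuous_const.sub (continuous_const.mul continuous_cE)) ?_
    intro θ
    exact Complex.mem_slitPlane_iff.mpr (Or.inl (hre (cE θ) (le_of_eq (abs_cE θ))))
  have hii : IntervalIntegrable (fun θ => f (cE θ)) volume 0 (2*π) :=
    hcont.intervalIntegrable 0 (2*π)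
  have h4 := Complex.reCLM.intervalIntegral_comp_comm hii
  rw [h3] at h4
  simp only [map_zero] at h4
  refine Eq.trans ?_ h4
  apply intervalIntegral.integral_congr
  intro θ _
  show Real.log (‖cE θ - a‖) = Complex.reCLM (f (cE θ))
  simp only [Complex.reCLM_apply, hf]
  rw [Complex.log_re]
  congr 1
  have key : 1 - b * cE θ = cE θ * ((starRingEnd ℂ) (cE θ - a)) := by
    rw [map_sub, mul_sub, cE_mul_conj θ, hb]
    ring_nf
  rw [key, norm_mul, abs_cE, one_mul, Complex.norm_conj]



lemma cE_abs_ne {z : ℂ} (θ : ℝ) (h : ‖z‖ ≠ 1) : cE θ - z ≠ 0 := by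
  intro hc
  apply h
  rw [← sub_eq_zero.mp hc, abs_cE]

lemma rot (θ φ : ℝ) : Real.log (‖cE θ - cE φ‖) = gg (θ - φ) := by
  unfold gg
  congr 1
  have h1 : cE φ * cE (θ - φ) = cE θ := by
    rw [← cE_add]; congr 1; ring
  have h2 : cE θ - cE φ = cE φ * (cE (θ - φ) - 1) := by
    rw [mul_sub, h1, mul_one]
  rw [h2, norm_mul, abs_cE, one_mul]

lemma shifted_int (φ : ℝ) : IntervalIntegrable (fun θ => gg (θ - φ)) volume 0 (2*π) := by
  have h := (gg_int_shift (-φ)).comp_sub_right φ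
  have e1 : -φ + φ = 0 := by ring
  have e2 : -φ + 2*π + φ = 2*π := by ring
  rwa [e1, e2] at h

lemma shifted_val (φ : ℝ) :
    ∫ θ in (0:ℝ)..(2*π), gg (θ - φ) = ∫ θ in (0:ℝ)..(2*π), gg θ := by
  rw [intervalIntegral.integral_comp_sub_right gg φ]
  have e1 : (0:ℝ) - φ = -φ := by ring
  have e2 : 2*π - φ = -φ + 2*π := by ring
  rw [e1, e2]
  have := gg_per.intervalIntegral_add_eq (-φ) 0
  rwa [zero_add] at this

lemma Jzero : ∫ θ in (0:ℝ)..(2*π), gg θ = 0 := by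
  have hπ := Real.pi_pos
  set J := ∫ θ in (0:ℝ)..(2*π), gg θ with hJ
  -- the function log |cE θ + 1|
  have hm1 : cE π = -1 := by
    rw [cE]; exact_mod_cast Complex.exp_pi_mul_I
  have hplus : ∀ θ : ℝ, Real.log (‖cE θ + 1‖) = gg (θ - π) := by
    intro θ
    rw [show cE θ + 1 = cE θ - cE π by rw [hm1]; ring]
    exact rot θ π
  have hplus_int : IntervalIntegrable (fun θ => Real.log (‖cE θ + 1‖)) volume 0 (2*π) := by
    have := shifted_int π
    apply this.congr
    intro θ _
    exact (hplus θ).symm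
  have hplus_val : ∫ θ in (0:ℝ)..(2*π), Real.log (‖cE θ + 1‖) = J := by
    rw [intervalIntegral.integral_congr (g := fun θ => gg (θ - π)) (fun θ _ => hplus θ)]
    exact shifted_val π
  -- doubling
  have hdouble : ∫ θ in (0:ℝ)..(2*π), gg (2*θ) = J := by
    rw [intervalIntegral.integral_comp_mul_left gg (by norm_num : (2:ℝ) ≠ 0)]
    have e1 : (2:ℝ) * 0 = 0 := by norm_num
    have e2 : (2:ℝ) * (2*π) = 2*π + 2*π := by ring
    rw [e1, e2]
    have hsplit := intervalIntegral.integral_add_adjacent_intervals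
      (a := (0:ℝ)) (b := 2*π) (c := 2*π + 2*π) gg_int_02pi ?_
    · rw [← hsplit]
      have := gg_per.intervalIntegral_add_eq (2*π) 0
      rw [zero_add] at this
      rw [this, ← hJ]
      norm_num
      ring
    · have h := gg_int_per 1
      have e3 : 2*π*((1:ℤ):ℝ) = 2*π := by push_cast; ring
      rwa [e3] at h
  -- a.e. identity gg (2θ) = gg θ + log|cE θ + 1|
  have hae : ∀ᵐ θ : ℝ, θ ∈ Set.uIoc (0:ℝ) (2*π) → gg (2*θ) = gg θ + Real.log (‖cE θ + 1‖) := by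
    have hcnull : volume ({θ : ℝ | cE θ = 1} ∪ {θ : ℝ | cE θ = -1}) = 0 :=
      Set.Countable.measure_zero ((countable_cE_eq 1).union (countable_cE_eq (-1))) _
    rw [← MeasureTheory.compl_mem_ae_iff] at hcnull
    filter_upwards [hcnull] with θ hθ _
    simp only [Set.mem_compl_iff, Set.mem_union, Set.mem_setOf_eq, not_or] at hθ
    obtain ⟨h1, h2⟩ := hθ
    have hfac : cE (2*θ) - 1 = (cE θ - 1) * (cE θ + 1) := by
      rw [show (2:ℝ)*θ = θ + θ by ring, cE_add]
      ring
    unfold gg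
    rw [hfac, norm_mul, Real.log_mul]
    · exact (norm_ne_zero_iff.mpr (sub_ne_zero.mpr h1))
    · exact (norm_ne_zero_iff.mpr (fun hc => h2 (by linear_combination hc)))
  have hsum : ∫ θ in (0:ℝ)..(2*π), gg (2*θ)
      = ∫ θ in (0:ℝ)..(2*π), (gg θ + Real.log (‖cE θ + 1‖)) := by
    apply intervalIntegral.integral_congr_ae
    filter_upwards [hae] with θ h hmem using h hmem
  rw [intervalIntegral.integral_add gg_int_02pi hplus_int, hplus_val, ← hJ] at hsum
  rw [hdouble] at hsum
  linarith



lemma key_cont {a : ℂ} (ha : ‖a‖ ≠ 1) :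
    Continuous (fun θ => Real.log (‖cE θ - a‖)) := by
  apply Continuous.log
  · exact continuous_norm.comp (continuous_cE.sub continuous_const)
  · intro θ
    exact norm_ne_zero_iff.mpr (cE_abs_ne θ ha)

lemma key (a : ℂ) :
    IntervalIntegrable (fun θ => Real.log (‖cE θ - a‖)) volume 0 (2*π) ∧
    ∫ θ in (0:ℝ)..(2*π), Real.log (‖cE θ - a‖)
      = 2*π * max (Real.log (‖a‖)) 0 := by
  rcases lt_trichotomy (‖a‖) 1 with h | h | h
  · refine ⟨(key_cont h.ne).intervalIntegrable 0 (2*π), ?_⟩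
    rw [meanvalue h]
    rw [max_eq_right (Real.log_nonpos (norm_nonneg _) h.le)]
    ring
  · -- |a| = 1 : a = cE (arg a)
    obtain ⟨φ, hφ⟩ : ∃ φ : ℝ, a = cE φ := by
      refine ⟨Complex.arg a, ?_⟩
      have h1 := Complex.norm_mul_exp_arg_mul_I a
      rw [h, Complex.ofReal_one, one_mul] at h1
      rw [cE]; exact h1.symm
    subst hφ
    have hident : ∀ θ : ℝ, Real.log (‖cE θ - cE φ‖) = gg (θ - φ) := fun θ => rot θ φ
    constructor
    · apply (shifted_int φ).congr
      intro θ _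
      exact (hident θ).symm
    · rw [intervalIntegral.integral_congr (g := fun θ => gg (θ - φ)) (fun θ _ => hident θ)]
      rw [shifted_val, Jzero, abs_cE, Real.log_one, max_self, mul_zero]
  · -- |a| > 1
    have ha0 : a ≠ 0 := by
      intro hc; rw [hc] at h; simp at h; linarith
    have hca : (starRingEnd ℂ) a ≠ 0 := by simpa using ha0
    set b := ((starRingEnd ℂ) a)⁻¹ with hbdef
    have hb : ‖b‖ = (‖a‖)⁻¹ := by
      rw [hbdef, norm_inv, Complex.norm_conj]
    have hblt : ‖b‖ < 1 := by
      rw [hb, inv_lt_one_iff₀]; right; exact h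
    have hident : ∀ θ : ℝ, Real.log (‖cE θ - a‖)
        = Real.log (‖a‖) + Real.log (‖cE θ - b‖) := by
      intro θ
      have e1 : (starRingEnd ℂ) (cE θ) * (starRingEnd ℂ) a * ((starRingEnd ℂ) a)⁻¹
          = (starRingEnd ℂ) (cE θ) := by
        rw [mul_assoc, mul_inv_cancel₀ hca, mul_one]
      have e2 : (starRingEnd ℂ) (cE θ) * (starRingEnd ℂ) a * cE θ = (starRingEnd ℂ) a := by
        calc (starRingEnd ℂ) (cE θ) * (starRingEnd ℂ) a * cE θ
            = cE θ * (starRingEnd ℂ) (cE θ) * (starRingEnd ℂ) a := by ring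
          _ = (starRingEnd ℂ) a := by rw [cE_mul_conj θ, one_mul]
      have halg : (starRingEnd ℂ) (cE θ) * (starRingEnd ℂ) a * (cE θ - b)
          = (starRingEnd ℂ) a - (starRingEnd ℂ) (cE θ) := by
        rw [hbdef, mul_sub, e1, e2]
      have h2 : ‖(starRingEnd ℂ) a - (starRingEnd ℂ) (cE θ)‖
          = ‖cE θ - a‖ := by
        rw [show (starRingEnd ℂ) a - (starRingEnd ℂ) (cE θ) = (starRingEnd ℂ) (a - cE θ) by
          rw [map_sub], Complex.norm_conj, norm_sub_rev]
      have h1 : ‖(starRingEnd ℂ) (cE θ) * (starRingEnd ℂ) a * (cE θ - b)‖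
          = ‖cE θ - b‖ * ‖a‖ := by
        rw [norm_mul, norm_mul, Complex.norm_conj, Complex.norm_conj, abs_cE]
        ring
      rw [halg, h2] at h1
      rw [h1, Real.log_mul ?hne (by positivity)]
      case hne =>
        exact norm_ne_zero_iff.mpr (cE_abs_ne θ hblt.ne)
      ring
    have hbcont := key_cont (a := b) hblt.ne
    refine ⟨?_, ?_⟩
    · rw [funext hident]
      exact intervalIntegrable_const.add (hbcont.intervalIntegrable 0 (2*π))
    · rw [intervalIntegral.integral_congr
        (g := fun θ => Real.log (‖a‖) + Real.log (‖cE θ - b‖))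
        (fun θ _ => hident θ)]
      rw [intervalIntegral.integral_add intervalIntegrable_const
        (hbcont.intervalIntegrable 0 (2*π)), meanvalue hblt,
        intervalIntegral.integral_const]
      rw [max_eq_left (Real.log_nonneg h.le)]
      simp



lemma multiInt (s : Multiset ℂ) :
    IntervalIntegrable (fun θ => ((s.map (fun z => Real.log (‖cE θ - z‖))).sum))
      volume 0 (2*π) ∧
    ∫ θ in (0:ℝ)..(2*π), ((s.map (fun z => Real.log (‖cE θ - z‖))).sum)
      = (s.map (fun z => 2*π * max (Real.log (‖z‖)) 0)).sum := by
  induction s using Multiset.induction with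
  | empty => simp
  | cons a s ih =>
    constructor
    · simp only [Multiset.map_cons, Multiset.sum_cons]
      exact (key a).1.add ih.1
    · simp only [Multiset.map_cons, Multiset.sum_cons]
      rw [intervalIntegral.integral_add (key a).1 ih.1, (key a).2, ih.2]

lemma log_multiset_prod (s : Multiset ℝ) (h : ∀ x ∈ s, x ≠ 0) :
    Real.log s.prod = (s.map Real.log).sum := by
  induction s using Multiset.induction with
  | empty => simp
  | cons a s ih =>
    rw [Multiset.prod_cons, Multiset.map_cons, Multiset.sum_cons,
      Real.log_mul (h a (Multiset.mem_cons_self a s))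
        (Multiset.prod_ne_zero (fun h0 => h 0 (Multiset.mem_cons_of_mem h0) rfl)),
      ih (fun x hx => h x (Multiset.mem_cons_of_mem hx))]

lemma roots_null (f : Polynomial ℂ) :
    volume {θ : ℝ | ¬ ∀ z ∈ f.roots, cE θ - z ≠ 0} = 0 := by
  refine measure_mono_null (t := ⋃ z ∈ f.roots.toFinset, {θ : ℝ | cE θ = z}) ?_ ?_
  · intro θ hθ
    simp only [mem_setOf_eq] at hθ
    push_neg at hθ
    obtain ⟨z, hz, he⟩ := hθ
    exact Set.mem_biUnion (Multiset.mem_toFinset.mpr hz) (sub_eq_zero.mp he)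
  · exact Set.Countable.measure_zero
      (Set.Countable.biUnion (f.roots.toFinset.countable_toSet)
        (fun z _ => countable_cE_eq z)) _

lemma polyInt (f : Polynomial ℂ) (hf : f ≠ 0) :
    IntervalIntegrable (fun θ => Real.log (‖f.eval (cE θ)‖)) volume 0 (2*π) ∧
    ∫ θ in (0:ℝ)..(2*π), Real.log (‖f.eval (cE θ)‖)
      = 2*π * Real.log (‖f.leadingCoeff‖)
        + (f.roots.map (fun z => 2*π * max (Real.log (‖z‖)) 0)).sum := by
  have hc0 : f.leadingCoeff ≠ 0 := Polynomial.leadingCoeff_ne_zero.mpr hf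
  have heval : ∀ w : ℂ, f.eval w = f.leadingCoeff * ((f.roots.map (fun z => w - z)).prod) := by
    intro w
    conv_lhs => rw [(IsAlgClosed.splits f).eq_prod_roots]
    rw [Polynomial.eval_mul, Polynomial.eval_C, Polynomial.eval_multiset_prod,
      Multiset.map_map]
    congr 1
    congr 1
    exact Multiset.map_congr rfl (fun z _ => by simp)
  set G : ℝ → ℝ := fun θ => Real.log (‖f.leadingCoeff‖)
      + ((f.roots.map (fun z => Real.log (‖cE θ - z‖))).sum) with hG
  have hgood : ∀ θ : ℝ, (∀ z ∈ f.roots, cE θ - z ≠ 0) →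
      Real.log (‖f.eval (cE θ)‖) = G θ := by
    intro θ hθ
    rw [heval (cE θ), norm_mul, (by exact map_multiset_prod (normHom : ℂ →*₀ ℝ) (f.roots.map (fun z => cE θ - z)) :
      ‖(f.roots.map (fun z => cE θ - z)).prod‖ = ((f.roots.map (fun z => cE θ - z)).map norm).prod),
      Multiset.map_map]
    rw [Real.log_mul (norm_ne_zero_iff.mpr hc0) ?hprod]
    case hprod =>
      apply Multiset.prod_ne_zero
      intro h0
      rw [Multiset.mem_map] at h0
      obtain ⟨z, hz, he⟩ := h0
      exact norm_ne_zero_iff.mpr (hθ z hz) (by simpa using he)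
    rw [hG]
    congr 1
    rw [log_multiset_prod _ ?hne, Multiset.map_map]
    case hne =>
      intro x hx
      rw [Multiset.mem_map] at hx
      obtain ⟨z, hz, he⟩ := hx
      rw [← he]
      exact norm_ne_zero_iff.mpr (hθ z hz)
    rfl
  have hae : ∀ᵐ θ : ℝ, Real.log (‖f.eval (cE θ)‖) = G θ := by
    filter_upwards [(MeasureTheory.compl_mem_ae_iff).mpr (roots_null f)] with θ hθ
    simp only [mem_compl_iff, mem_setOf_eq, not_not] at hθ
    exact hgood θ hθ
  have hGint : IntervalIntegrable G volume 0 (2*π) :=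
    intervalIntegrable_const.add (multiInt f.roots).1
  have hFint : IntervalIntegrable (fun θ => Real.log (‖f.eval (cE θ)‖)) volume 0 (2*π) := by
    rw [intervalIntegrable_iff] at hGint ⊢
    exact hGint.congr (MeasureTheory.ae_restrict_of_ae (hae.mono fun θ h => h.symm))
  refine ⟨hFint, ?_⟩
  rw [intervalIntegral.integral_congr_ae (hae.mono fun θ h _ => h)]
  rw [hG, intervalIntegral.integral_add intervalIntegrable_const (multiInt f.roots).1,
    intervalIntegral.integral_const, (multiInt f.roots).2]
  simp only [smul_eq_mul, sub_zero]

lemma sum_max_filter (s : Multiset ℂ) :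
    (s.map (fun z => max (Real.log (‖z‖)) 0)).sum
      = (Multiset.map (fun z => Real.log (‖z‖))
          (Multiset.filter (fun z => 1 < ‖z‖) s)).sum := by
  induction s using Multiset.induction with
  | empty => simp
  | cons a s ih =>
    rw [Multiset.map_cons, Multiset.sum_cons, ih]
    by_cases h : 1 < ‖a‖
    · rw [Multiset.filter_cons_of_pos (p := fun z => 1 < ‖z‖) _ h, Multiset.map_cons, Multiset.sum_cons,
        max_eq_left (Real.log_nonneg h.le)]
    · rw [Multiset.filter_cons_of_neg (p := fun z => 1 < ‖z‖) _ h,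
        max_eq_right (Real.log_nonpos (norm_nonneg _) (not_lt.mp h)), zero_add]

/-- Bode integral / rate identity: for a stable strictly proper rational filter
`Q = p/q`, the Bode integral of the sensitivity `1 + Q` equals the sum of
`log |z|` over the roots `z` of `p + q` outside the (closed) unit disc. -/
theorem bode_integral_rate (p q : Polynomial ℂ) (hq : q ≠ 0)
    (hroots : ∀ z ∈ q.roots, ‖z‖ < 1)
    (hdeg : p.degree < q.degree) :
    p + q ≠ 0 ∧
    (1 / (2 * Real.pi)) *
        (∫ θ in (0:ℝ)..(2 * Real.pi),
          Real.log (‖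
            (1 + p.eval (Complex.exp (θ * Complex.I)) /
                  q.eval (Complex.exp (θ * Complex.I)))‖)) =
      (Multiset.map (fun z => Real.log ‖z‖)
        (Multiset.filter (fun z => 1 < ‖z‖) (p + q).roots)).sum := by
  have hπ := Real.pi_pos
  have hdq : (p + q).degree = q.degree := Polynomial.degree_add_eq_right_of_degree_lt hdeg
  have hrne : p + q ≠ 0 := by
    intro hc
    rw [hc, Polynomial.degree_zero] at hdq
    exact hq (Polynomial.degree_eq_bot.mp hdq.symm)
  refine ⟨hrne, ?_⟩
  have hlc : (p + q).leadingCoeff = q.leadingCoeff := Polynomial.leadingCoeff_add_of_degree_lt hdeg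
  have hqe : ∀ θ : ℝ, q.eval (cE θ) ≠ 0 := by
    intro θ hc
    have hmem : (cE θ) ∈ q.roots := (Polynomial.mem_roots hq).mpr hc
    have := hroots _ hmem
    rw [abs_cE] at this; linarith
  show (1 / (2*π)) * (∫ θ in (0:ℝ)..(2*π),
      Real.log (‖1 + p.eval (cE θ) / q.eval (cE θ)‖)) = _
  have hpt : ∀ θ : ℝ, Real.log (‖1 + p.eval (cE θ) / q.eval (cE θ)‖)
      = Real.log (‖(p+q).eval (cE θ)‖ / ‖q.eval (cE θ)‖) := by
    intro θ
    rw [← norm_div]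
    congr 2
    rw [Polynomial.eval_add, add_div, div_self (hqe θ), add_comm]
  have hae : ∀ᵐ θ : ℝ, Real.log (‖1 + p.eval (cE θ) / q.eval (cE θ)‖)
      = Real.log (‖(p+q).eval (cE θ)‖) - Real.log (‖q.eval (cE θ)‖) := by
    filter_upwards [(MeasureTheory.compl_mem_ae_iff).mpr (roots_null (p+q))] with θ hθ
    simp only [mem_compl_iff, mem_setOf_eq, not_not] at hθ
    have hre : (p+q).eval (cE θ) ≠ 0 := by
      intro hc
      have hmem : (cE θ) ∈ (p+q).roots := (Polynomial.mem_roots hrne).mpr hc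
      exact hθ _ hmem (sub_eq_zero.mpr rfl)
    rw [hpt θ, Real.log_div (norm_ne_zero_iff.mpr hre)
      (norm_ne_zero_iff.mpr (hqe θ))]
  rw [intervalIntegral.integral_congr_ae (hae.mono fun θ h _ => h)]
  rw [intervalIntegral.integral_sub (polyInt (p+q) hrne).1 (polyInt q hq).1]
  rw [(polyInt (p+q) hrne).2, (polyInt q hq).2, hlc]
  have hq0 : (q.roots.map (fun z => 2*π * max (Real.log (‖z‖)) 0)).sum = 0 := by
    apply Multiset.sum_eq_zero
    intro x hx
    rw [Multiset.mem_map] at hx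
    obtain ⟨z, hz, he⟩ := hx
    rw [← he, max_eq_right (Real.log_nonpos (norm_nonneg _) (hroots z hz).le), mul_zero]
  rw [hq0, add_zero]
  rw [Multiset.sum_map_mul_left]
  rw [show (2*π * Real.log (‖q.leadingCoeff‖)
        + 2*π * (Multiset.map (fun z => max (Real.log (‖z‖)) 0) (p+q).roots).sum
        - 2*π * Real.log (‖q.leadingCoeff‖))
      = 2*π * (Multiset.map (fun z => max (Real.log (‖z‖)) 0) (p+q).roots).sum by ring]
  rw [← mul_assoc]
  rw [one_div_mul_cancel (by positivity : (2*π:ℝ) ≠ 0)]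
  rw [one_mul, sum_max_filter]
end

section
/- Let s > 0 and c, d ∈ ℝ with r² := (s + c)² + d² > 0, and set ν := (−r² + √(r⁴ + 4 s r²))/2 (so that 0 < ν < s). Then for all real numbers a, b with (1+a)² + b² > 0: (1/2)·log((1+a)² + b²) + c·a + d·b − (s/2)·(a² + b²) ≤ −(1/2)·log(s − ν) + r²/(2ν) − c − s/2 − 1/2, with equality if and only if a = (s + c)/ν − 1 and b = d/ν. -/
set_option maxHeartbeats 1000000 in
/-- Pointwise per-frequency Lagrangian maximization (Theorem 2(a)):
with `s = 2λS_w`, `c = η'A + η₀`, `d = η'B`, `r² = (s+c)² + d²` and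
`ν = (-r² + √(r⁴ + 4sr²))/2`, the Lagrangian integrand is maximized exactly at
`a = (s+c)/ν - 1`, `b = d/ν`. -/
theorem pointwise_lagrangian_max (s c d : ℝ) (hs : 0 < s)
    (r2 : ℝ) (hr2 : r2 = (s + c) ^ 2 + d ^ 2) (hr2pos : 0 < r2)
    (ν : ℝ) (hν : ν = (-r2 + Real.sqrt (r2 ^ 2 + 4 * s * r2)) / 2) :
    (0 < ν ∧ ν < s) ∧
    ∀ a b : ℝ, 0 < (1 + a) ^ 2 + b ^ 2 →
      ((1 / 2) * Real.log ((1 + a) ^ 2 + b ^ 2) + c * a + d * b -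
          (s / 2) * (a ^ 2 + b ^ 2) ≤
        -(1 / 2) * Real.log (s - ν) + r2 / (2 * ν) - c - s / 2 - 1 / 2) ∧
      ((1 / 2) * Real.log ((1 + a) ^ 2 + b ^ 2) + c * a + d * b -
          (s / 2) * (a ^ 2 + b ^ 2) =
        -(1 / 2) * Real.log (s - ν) + r2 / (2 * ν) - c - s / 2 - 1 / 2 ↔
        a = (s + c) / ν - 1 ∧ b = d / ν) := by
  have hr2ne : r2 ≠ 0 := ne_of_gt hr2pos
  have hR2 : (Real.sqrt (r2 ^ 2 + 4 * s * r2)) ^ 2 = r2 ^ 2 + 4 * s * r2 :=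
    Real.sq_sqrt (by positivity)
  have hRnn : 0 ≤ Real.sqrt (r2 ^ 2 + 4 * s * r2) := Real.sqrt_nonneg _
  have hroot : ν ^ 2 + r2 * ν - s * r2 = 0 := by
    rw [hν]; linear_combination hR2 / 4
  have hνpos : 0 < ν := by
    rw [hν]
    nlinarith [hR2, hRnn, mul_pos hs hr2pos]
  have hνne : ν ≠ 0 := ne_of_gt hνpos
  have hνlts : ν < s := by nlinarith [hroot, mul_pos hνpos hνpos]
  have hkey : r2 * (s - ν) = ν ^ 2 := by linear_combination -hroot
  have hsνpos : 0 < s - ν := sub_pos.mpr hνlts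
  refine ⟨⟨hνpos, hνlts⟩, ?_⟩
  intro a b hT
  set T := (1 + a) ^ 2 + b ^ 2 with hTdef
  have hXpos : 0 < T * ν ^ 2 / r2 := by positivity
  have hlogT : Real.log T = Real.log (T * ν ^ 2 / r2) - Real.log (s - ν) := by
    rw [Real.log_div (ne_of_gt (by positivity)) hr2ne,
      Real.log_mul (ne_of_gt hT) (by positivity)]
    have hsνeq : Real.log (s - ν) = Real.log (ν ^ 2) - Real.log r2 := by
      rw [← Real.log_div (by positivity) hr2ne]
      congr 1
      field_simp
      linear_combination hkey
    linarith [hsνeq]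
  have hid : (1 / 2) * (T * ν ^ 2 / r2 - 1) + c * a + d * b - s / 2 * (a ^ 2 + b ^ 2)
      = (r2 / (2 * ν) - c - s / 2 - 1 / 2)
        - (1 / (2 * ν)) * ((ν * (1 + a) - (s + c)) ^ 2 + (ν * b - d) ^ 2) := by
    have h1 : ((1 + a) ^ 2 + b ^ 2) * ν ^ 2 / r2 = ((1 + a) ^ 2 + b ^ 2) * (s - ν) := by
      rw [div_eq_iff hr2ne]
      linear_combination (-((1 + a) ^ 2 + b ^ 2)) * hkey
    rw [hTdef, h1]
    have h2 : r2 / (2 * ν) - (1 / (2 * ν)) * ((ν * (1 + a) - (s + c)) ^ 2 + (ν * b - d) ^ 2)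
        = ((1 + a) * (s + c) + b * d) - (ν / 2) * ((1 + a) ^ 2 + b ^ 2) := by
      field_simp
      linear_combination hr2
    linear_combination -h2
  have hg : 0 ≤ (1 / (2 * ν)) * ((ν * (1 + a) - (s + c)) ^ 2 + (ν * b - d) ^ 2) := by
    positivity
  have hlog : Real.log (T * ν ^ 2 / r2) ≤ T * ν ^ 2 / r2 - 1 :=
    Real.log_le_sub_one_of_pos hXpos
  constructor
  · linarith [hlogT, hlog, hid, hg]
  constructor
  · intro heq
    have hgle : (1 / (2 * ν)) * ((ν * (1 + a) - (s + c)) ^ 2 + (ν * b - d) ^ 2) ≤ 0 := by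
      linarith [hlogT, hlog, hid, heq]
    have hk : 0 < 1 / (2 * ν) := by positivity
    have hSle : (ν * (1 + a) - (s + c)) ^ 2 + (ν * b - d) ^ 2 ≤ 0 := by
      by_contra h
      push_neg at h
      nlinarith [mul_pos hk h]
    have hp : ν * (1 + a) - (s + c) = 0 := by
      have : (ν * (1 + a) - (s + c)) ^ 2 = 0 := by
        nlinarith [sq_nonneg (ν * (1 + a) - (s + c)), sq_nonneg (ν * b - d)]
      exact sq_eq_zero_iff.mp this
    have hq : ν * b - d = 0 := by
      have : (ν * b - d) ^ 2 = 0 := by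
        nlinarith [sq_nonneg (ν * (1 + a) - (s + c)), sq_nonneg (ν * b - d)]
      exact sq_eq_zero_iff.mp this
    constructor
    · rw [eq_sub_iff_add_eq, eq_div_iff hνne]; linear_combination hp
    · rw [eq_div_iff hνne]; linear_combination hq
  · rintro ⟨ha, hb⟩
    have hp : (ν * (1 + a) - (s + c)) ^ 2 = 0 := by
      rw [ha]; field_simp; ring
    have hq : (ν * b - d) ^ 2 = 0 := by
      rw [hb]; field_simp; ring
    have hX1 : T * ν ^ 2 / r2 = 1 := by
      rw [hTdef, ha, hb]
      field_simp
      linear_combination -hr2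
    have hlogX : Real.log (T * ν ^ 2 / r2) = 0 := by rw [hX1]; exact Real.log_one
    have hg0 : (1 / (2 * ν)) * ((ν * (1 + a) - (s + c)) ^ 2 + (ν * b - d) ^ 2) = 0 := by
      rw [hp, hq]; ring
    linarith [hlogT, hid, hX1, hlogX, hg0]
end

section
/- Fix a continuous 2π-periodic S_w : ℝ → ℝ with S_w(θ) > 0 for all θ, P > 0 and h ∈ ℕ. Let λ > 0, η = (η₁, …, η_h) ∈ ℝ^h and η₀ ∈ ℝ be such that r²(θ) := (2λS_w(θ) + Σ_{n=1}^h η_n cos(nθ) + η₀)² + (Σ_{n=1}^h η_n sin(nθ))² > 0 for every θ ∈ [−π, π]. Define ν(θ) := (−r²(θ) + √(r⁴(θ) + 8λS_w(θ)r²(θ)))/2 and g(λ, η, η₀) := (1/(2π))∫_{−π}^{π} [ (1/2)log(2λS_w(θ) − ν(θ)) − r²(θ)/(2ν(θ)) + λS_w(θ) ] dθ − λP + η₀ + 1/2. Then for every h-feasible pair (a, b): (1/(4π)) ∫_{−π}^{π} log((1 + a(θ))² + b(θ)²) dθ ≤ −g(λ, η, η₀). In particular C_fb(h) ≤ −g(λ,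 η, η₀), so every such dual-feasible triple yields an upper bound on the h-constrained capacity C_fb(h) and hence on the feedback capacity. -/
open MeasureTheory

/-- `(a, b)` is an `h`-feasible pair for the `h`-constrained feedback-capacity
problem with noise power spectral density `Sw` and power budget `P`. -/
def HFeasible (Sw : ℝ → ℝ) (P : ℝ) (h : ℕ) (a b : ℝ → ℝ) : Prop :=
  Measurable a ∧ Measurable b ∧
  IntegrableOn (fun θ => a θ ^ 2) (Set.Icc (-Real.pi) Real.pi) ∧
  IntegrableOn (fun θ => b θ ^ 2) (Set.Icc (-Real.pi) Real.pi) ∧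
  (∀ᵐ θ ∂(volume.restrict (Set.Icc (-Real.pi) Real.pi)),
    0 < (1 + a θ) ^ 2 + b θ ^ 2) ∧
  IntegrableOn (fun θ => Real.log ((1 + a θ) ^ 2 + b θ ^ 2))
    (Set.Icc (-Real.pi) Real.pi) ∧
  (1 / (2 * Real.pi)) *
      (∫ θ in (-Real.pi)..Real.pi, (a θ ^ 2 + b θ ^ 2) * Sw θ) ≤ P ∧
  ∀ n : ℕ, n ≤ h →
    (∫ θ in (-Real.pi)..Real.pi,
      (a θ * Real.cos (n * θ) + b θ * Real.sin (n * θ))) = 0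

/-- The objective functional `(1/(4π)) ∫ log((1+a)² + b²)`. -/
noncomputable def hObjective (a b : ℝ → ℝ) : ℝ :=
  (1 / (4 * Real.pi)) *
    ∫ θ in (-Real.pi)..Real.pi, Real.log ((1 + a θ) ^ 2 + b θ ^ 2)

/-- The `h`-upper-bound `C_fb(h)`: the supremum of the objective over
`h`-feasible pairs. -/
noncomputable def Cfb (Sw : ℝ → ℝ) (P : ℝ) (h : ℕ) : ℝ :=
  sSup {R : ℝ | ∃ a b : ℝ → ℝ, HFeasible Sw P h a b ∧ R = hObjective a b}

set_option maxHeartbeats 2000000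

lemma nu_facts (lam S r2v nuv : ℝ) (hlam : 0 < lam) (hS : 0 < S) (hr2pos : 0 < r2v)
    (hnu : nuv = (-r2v + Real.sqrt (r2v ^ 2 + 8 * lam * S * r2v)) / 2) :
    0 < nuv ∧ nuv ^ 2 + r2v * nuv = 2 * lam * S * r2v := by
  have hs2 : Real.sqrt (r2v ^ 2 + 8 * lam * S * r2v) ^ 2 = r2v ^ 2 + 8 * lam * S * r2v :=
    Real.sq_sqrt (by positivity)
  have hs0 : 0 ≤ Real.sqrt (r2v ^ 2 + 8 * lam * S * r2v) := Real.sqrt_nonneg _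
  have hsgt : r2v < Real.sqrt (r2v ^ 2 + 8 * lam * S * r2v) := by
    nlinarith [mul_pos (mul_pos hlam hS) hr2pos]
  constructor
  · rw [hnu]; linarith
  · rw [hnu]; linear_combination hs2 / 4

lemma pointwise_ineq (lam S c1 c2 r2v nuv x y : ℝ) (hlam : 0 < lam) (hS : 0 < S)
    (hr2 : r2v = (2 * lam * S + c1) ^ 2 + c2 ^ 2) (hr2pos : 0 < r2v)
    (hnu : nuv = (-r2v + Real.sqrt (r2v ^ 2 + 8 * lam * S * r2v)) / 2)
    (hxy : 0 < (1 + x) ^ 2 + y ^ 2) :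
    (1 / 2) * Real.log ((1 + x) ^ 2 + y ^ 2) ≤
      lam * ((x ^ 2 + y ^ 2) * S) - (c1 * x + c2 * y)
        - ((1 / 2) * Real.log (2 * lam * S - nuv) - r2v / (2 * nuv) + lam * S)
        - c1 - 1 / 2 := by
  obtain ⟨hnu0, hkey⟩ := nu_facts lam S r2v nuv hlam hS hr2pos hnu
  have h2lS : 2 * lam * S - nuv = nuv ^ 2 / r2v := by
    field_simp
    linear_combination -hkey
  have hpos2 : 0 < 2 * lam * S - nuv := by rw [h2lS]; positivity
  obtain ⟨r, hr0, hr2'⟩ : ∃ r : ℝ, 0 < r ∧ r ^ 2 = r2v :=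
    ⟨Real.sqrt r2v, Real.sqrt_pos.2 hr2pos, Real.sq_sqrt hr2pos.le⟩
  obtain ⟨t, ht0, ht2⟩ : ∃ t : ℝ, 0 < t ∧ t ^ 2 = (1 + x) ^ 2 + y ^ 2 :=
    ⟨Real.sqrt _, Real.sqrt_pos.2 hxy, Real.sq_sqrt hxy.le⟩
  obtain ⟨T, hTdef⟩ : ∃ T : ℝ, T = r / nuv := ⟨_, rfl⟩
  have hT0 : 0 < T := by rw [hTdef]; positivity
  have hTnu : nuv * T = r := by rw [hTdef]; field_simp
  have hid : 2 * lam * S * T ^ 2 = r * T + 1 := by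
    have h9 : (2 * lam * S * T ^ 2 - (r * T + 1)) * nuv ^ 2 = 0 := by
      linear_combination (2 * lam * S * (T * nuv + r) - r * nuv) * hTnu - hkey +
        (2 * lam * S - nuv) * hr2'
    rcases mul_eq_zero.1 h9 with h | h
    · linarith
    · exact absurd h (by positivity)
  -- Cauchy-Schwarz
  have hcs : (2 * lam * S + c1) * (1 + x) + c2 * y ≤ r * t := by
    have h1 : ((2 * lam * S + c1) * (1 + x) + c2 * y) ^ 2 ≤ (r * t) ^ 2 := by
      nlinarith [sq_nonneg ((2 * lam * S + c1) * y - c2 * (1 + x))]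
    nlinarith [mul_pos hr0 ht0]
  -- log facts
  have hlog1 : Real.log ((1 + x) ^ 2 + y ^ 2) = 2 * Real.log t := by
    rw [← ht2, Real.log_pow]; norm_num
  have hlog2 : Real.log t ≤ Real.log T + (t / T - 1) := by
    have hd := Real.log_le_sub_one_of_pos (show 0 < t / T by positivity)
    rw [Real.log_div ht0.ne' hT0.ne'] at hd
    linarith
  have hlogT : Real.log (2 * lam * S - nuv) = -2 * Real.log T := by
    have e1 : Real.log r2v = 2 * Real.log r := by
      rw [← hr2', Real.log_pow]; norm_num
    have e2 : Real.log T = Real.log r - Real.log nuv := by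
      rw [hTdef, Real.log_div hr0.ne' hnu0.ne']
    have e3 : Real.log (nuv ^ 2) = 2 * Real.log nuv := by
      rw [Real.log_pow]; norm_num
    rw [h2lS, Real.log_div (by positivity) hr2pos.ne']
    linarith
  have hinvT : 1 / T = 2 * lam * S * T - r := by
    field_simp
    linear_combination -hid
  have hdivt : t / T = (2 * lam * S * T - r) * t := by
    rw [div_eq_mul_one_div, hinvT]; ring
  have hquad : t / T - 1 + r * t - lam * S * t ^ 2 ≤ r * T - lam * S * T ^ 2 := by
    rw [hdivt]
    have hq2 : r * T - lam * S * T ^ 2 - ((2 * lam * S * T - r) * t - 1 + r * t - lam * S * t ^ 2)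
        = lam * S * (t - T) ^ 2 := by linear_combination -hid
    nlinarith [hq2, mul_nonneg (mul_pos hlam hS).le (sq_nonneg (t - T))]
  have h6 : r * T * nuv = r2v := by
    rw [show r * T * nuv = r * (nuv * T) by ring, hTnu]; linear_combination hr2'
  have h7 : r2v / (2 * nuv) = r * T / 2 := by
    rw [← h6]; field_simp
  have hfin : r * T - lam * S * T ^ 2 = r2v / (2 * nuv) - 1 / 2 := by
    rw [h7]; linarith
  have hexp : lam * ((x ^ 2 + y ^ 2) * S) - (c1 * x + c2 * y) - lam * S - c1
      = lam * S * t ^ 2 - ((2 * lam * S + c1) * (1 + x) + c2 * y) := by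
    linear_combination (-(lam * S)) * ht2
  rw [hlog1, hlogT]
  linarith

lemma my_toII {f : ℝ → ℝ} (hf : IntegrableOn f (Set.Icc (-Real.pi) Real.pi)) :
    IntervalIntegrable f volume (-Real.pi) Real.pi := by
  rw [intervalIntegrable_iff_integrableOn_Ioc_of_le (by linarith [Real.pi_pos])]
  exact hf.mono_set Set.Ioc_subset_Icc_self

lemma my_mul_int {F u : ℝ → ℝ} (hF : ContinuousOn F (Set.Icc (-Real.pi) Real.pi))
    (hu : IntegrableOn u (Set.Icc (-Real.pi) Real.pi)) :
    IntegrableOn (fun θ => F θ * u θ) (Set.Icc (-Real.pi) Real.pi) := by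
  obtain ⟨C, hC⟩ := IsCompact.exists_bound_of_continuousOn isCompact_Icc hF
  exact Integrable.bdd_mul hu (hF.aestronglyMeasurable measurableSet_Icc)
    ((ae_restrict_mem measurableSet_Icc).mono hC)

lemma sq_int_to_int {u : ℝ → ℝ} (hm : Measurable u)
    (hu : IntegrableOn (fun θ => u θ ^ 2) (Set.Icc (-Real.pi) Real.pi)) :
    IntegrableOn u (Set.Icc (-Real.pi) Real.pi) := by
  have hone : IntegrableOn (fun _ : ℝ => (1 : ℝ)) (Set.Icc (-Real.pi) Real.pi) :=
    integrableOn_const measure_Icc_lt_top.ne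
  have hsum : IntegrableOn (fun θ => u θ ^ 2 + 1) (Set.Icc (-Real.pi) Real.pi) := hu.add hone
  refine hsum.mono' hm.aestronglyMeasurable ?_
  filter_upwards with θ
  rw [Real.norm_eq_abs]
  nlinarith [sq_abs (u θ), sq_nonneg (|u θ| - 1)]

lemma cos_int_zero (k : ℕ) :
    (∫ θ in (-Real.pi)..Real.pi, Real.cos (((k : ℝ) + 1) * θ)) = 0 := by
  have hk : ((k : ℝ) + 1) ≠ 0 := by positivity
  have h1 : Real.sin (((k : ℝ) + 1) * Real.pi) = 0 := by
    have := Real.sin_nat_mul_pi (k + 1)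
    push_cast at this
    exact this
  have h2 : Real.sin (((k : ℝ) + 1) * (-Real.pi)) = 0 := by
    rw [mul_neg, Real.sin_neg, h1, neg_zero]
  rw [intervalIntegral.integral_comp_mul_left Real.cos hk, integral_cos, h1, h2]
  simp

/-- Weak duality (Theorem 2(a) / Corollary 1): every dual-feasible triple
`(λ, η, η₀)` gives an upper bound `-g(λ, η, η₀)` on the objective of every
`h`-feasible pair, hence on `C_fb(h)`. -/
theorem weak_duality (Sw : ℝ → ℝ) (hScont : Continuous Sw)
    (hSper : ∀ θ : ℝ, Sw (θ + 2 * Real.pi) = Sw θ) (hSpos : ∀ θ : ℝ, 0 < Sw θ)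
    (P : ℝ) (hP : 0 < P) (h : ℕ)
    (lam : ℝ) (hlam : 0 < lam) (η : Fin h → ℝ) (η₀ : ℝ)
    (r2 : ℝ → ℝ)
    (hr2 : r2 = fun θ =>
      (2 * lam * Sw θ + (∑ n : Fin h, η n * Real.cos (((n : ℕ) + 1) * θ)) + η₀) ^ 2 +
        (∑ n : Fin h, η n * Real.sin (((n : ℕ) + 1) * θ)) ^ 2)
    (hr2pos : ∀ θ ∈ Set.Icc (-Real.pi) Real.pi, 0 < r2 θ)
    (ν : ℝ → ℝ)
    (hν : ν = fun θ =>
      (-r2 θ + Real.sqrt ((r2 θ) ^ 2 + 8 * lam * Sw θ * r2 θ)) / 2)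
    (g : ℝ)
    (hg : g = (1 / (2 * Real.pi)) *
        (∫ θ in (-Real.pi)..Real.pi,
          ((1 / 2) * Real.log (2 * lam * Sw θ - ν θ) - r2 θ / (2 * ν θ) +
            lam * Sw θ)) - lam * P + η₀ + 1 / 2) :
    (∀ a b : ℝ → ℝ, HFeasible Sw P h a b → hObjective a b ≤ -g) ∧
    Cfb Sw P h ≤ -g := by
  have hπ := Real.pi_pos
  have hππ : -Real.pi ≤ Real.pi := by linarith
  have main : ∀ a b : ℝ → ℝ, HFeasible Sw P h a b → hObjective a b ≤ -g := by
    intro a b hf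
    obtain ⟨hma, hmb, ha2, hb2, hposab, hlogint, hpow, horth⟩ := hf
    -- continuity facts
    have hc1c : Continuous (fun θ : ℝ =>
        (∑ n : Fin h, η n * Real.cos (((n : ℕ) + 1) * θ)) + η₀) := by fun_prop
    have hP2c : Continuous (fun θ : ℝ =>
        ∑ n : Fin h, η n * Real.sin (((n : ℕ) + 1) * θ)) := by fun_prop
    have hr2c : Continuous r2 := by rw [hr2]; fun_prop
    have hνc : Continuous ν := by rw [hν]; fun_prop
    -- pointwise ν facts
    have hnuθ : ∀ θ ∈ Set.Icc (-Real.pi) Real.pi,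
        0 < ν θ ∧ (ν θ) ^ 2 + r2 θ * ν θ = 2 * lam * Sw θ * r2 θ := fun θ hθ =>
      nu_facts lam (Sw θ) (r2 θ) (ν θ) hlam (hSpos θ) (hr2pos θ hθ) (by simp only [hν])
    have h2lSpos : ∀ θ ∈ Set.Icc (-Real.pi) Real.pi, 0 < 2 * lam * Sw θ - ν θ := by
      intro θ hθ
      obtain ⟨h1, h2⟩ := hnuθ θ hθ
      nlinarith [hr2pos θ hθ, pow_pos h1 2]
    -- integrability
    have haint := sq_int_to_int hma ha2
    have hbint := sq_int_to_int hmb hb2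
    have habSw : IntegrableOn (fun θ => (a θ ^ 2 + b θ ^ 2) * Sw θ)
        (Set.Icc (-Real.pi) Real.pi) := by
      simpa [mul_comm] using my_mul_int (F := Sw) hScont.continuousOn (ha2.add hb2)
    have hc1a : IntegrableOn (fun θ =>
        ((∑ n : Fin h, η n * Real.cos (((n : ℕ) + 1) * θ)) + η₀) * a θ)
        (Set.Icc (-Real.pi) Real.pi) := my_mul_int hc1c.continuousOn haint
    have hc2b : IntegrableOn (fun θ =>
        (∑ n : Fin h, η n * Real.sin (((n : ℕ) + 1) * θ)) * b θ)
        (Set.Icc (-Real.pi) Real.pi) := my_mul_int hP2c.continuousOn hbint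
    have hIcont : ContinuousOn (fun θ =>
        (1 / 2) * Real.log (2 * lam * Sw θ - ν θ) - r2 θ / (2 * ν θ) + lam * Sw θ)
        (Set.Icc (-Real.pi) Real.pi) := by
      refine ContinuousOn.add (ContinuousOn.sub ?_ ?_) (continuous_const.mul hScont).continuousOn
      · exact continuousOn_const.mul
          (((continuous_const.mul hScont).sub hνc).continuousOn.log
            (fun θ hθ => (h2lSpos θ hθ).ne'))
      · exact hr2c.continuousOn.div (continuous_const.mul hνc).continuousOn
          (fun θ hθ => by have := (hnuθ θ hθ).1; positivity)
    have hIint : IntegrableOn (fun θ =>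
        (1 / 2) * Real.log (2 * lam * Sw θ - ν θ) - r2 θ / (2 * ν θ) + lam * Sw θ)
        (Set.Icc (-Real.pi) Real.pi) := hIcont.integrableOn_compact isCompact_Icc
    -- interval integrability
    have ii1 : IntervalIntegrable (fun θ => lam * ((a θ ^ 2 + b θ ^ 2) * Sw θ))
        volume (-Real.pi) Real.pi := my_toII (habSw.const_mul lam)
    have ii2 : IntervalIntegrable (fun θ =>
        ((∑ n : Fin h, η n * Real.cos (((n : ℕ) + 1) * θ)) + η₀) * a θ +
          (∑ n : Fin h, η n * Real.sin (((n : ℕ) + 1) * θ)) * b θ)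
        volume (-Real.pi) Real.pi := my_toII (hc1a.add hc2b)
    have ii3 : IntervalIntegrable (fun θ =>
        (1 / 2) * Real.log (2 * lam * Sw θ - ν θ) - r2 θ / (2 * ν θ) + lam * Sw θ)
        volume (-Real.pi) Real.pi := my_toII hIint
    have ii4 : IntervalIntegrable (fun θ : ℝ =>
        (∑ n : Fin h, η n * Real.cos (((n : ℕ) + 1) * θ)) + η₀)
        volume (-Real.pi) Real.pi := hc1c.intervalIntegrable _ _
    have ii5 : IntervalIntegrable (fun _ : ℝ => (1 / 2 : ℝ)) volume (-Real.pi) Real.pi :=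
      intervalIntegrable_const
    have iif : IntervalIntegrable (fun θ => (1 / 2) * Real.log ((1 + a θ) ^ 2 + b θ ^ 2))
        volume (-Real.pi) Real.pi := my_toII (hlogint.const_mul _)
    have iiG : IntervalIntegrable (fun θ =>
        lam * ((a θ ^ 2 + b θ ^ 2) * Sw θ) -
          (((∑ n : Fin h, η n * Real.cos (((n : ℕ) + 1) * θ)) + η₀) * a θ +
            (∑ n : Fin h, η n * Real.sin (((n : ℕ) + 1) * θ)) * b θ) -
          ((1 / 2) * Real.log (2 * lam * Sw θ - ν θ) - r2 θ / (2 * ν θ) + lam * Sw θ) -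
          ((∑ n : Fin h, η n * Real.cos (((n : ℕ) + 1) * θ)) + η₀) - 1 / 2)
        volume (-Real.pi) Real.pi := (((ii1.sub ii2).sub ii3).sub ii4).sub ii5
    -- a.e. pointwise inequality
    have hae : (fun θ => (1 / 2) * Real.log ((1 + a θ) ^ 2 + b θ ^ 2)) ≤ᵐ[volume.restrict
        (Set.Icc (-Real.pi) Real.pi)] (fun θ =>
        lam * ((a θ ^ 2 + b θ ^ 2) * Sw θ) -
          (((∑ n : Fin h, η n * Real.cos (((n : ℕ) + 1) * θ)) + η₀) * a θ +
            (∑ n : Fin h, η n * Real.sin (((n : ℕ) + 1) * θ)) * b θ) -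
          ((1 / 2) * Real.log (2 * lam * Sw θ - ν θ) - r2 θ / (2 * ν θ) + lam * Sw θ) -
          ((∑ n : Fin h, η n * Real.cos (((n : ℕ) + 1) * θ)) + η₀) - 1 / 2) := by
      filter_upwards [hposab, ae_restrict_mem measurableSet_Icc] with θ hp hθ
      exact pointwise_ineq lam (Sw θ)
        ((∑ n : Fin h, η n * Real.cos (((n : ℕ) + 1) * θ)) + η₀)
        (∑ n : Fin h, η n * Real.sin (((n : ℕ) + 1) * θ))
        (r2 θ) (ν θ) (a θ) (b θ) hlam (hSpos θ)
        (by simp only [hr2]; ring) (hr2pos θ hθ) (by simp only [hν]) hp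
    have hle1 := intervalIntegral.integral_mono_ae_restrict hππ iif iiG hae
    -- split the RHS integral
    have hsplit : (∫ θ in (-Real.pi)..Real.pi,
        (lam * ((a θ ^ 2 + b θ ^ 2) * Sw θ) -
          (((∑ n : Fin h, η n * Real.cos (((n : ℕ) + 1) * θ)) + η₀) * a θ +
            (∑ n : Fin h, η n * Real.sin (((n : ℕ) + 1) * θ)) * b θ) -
          ((1 / 2) * Real.log (2 * lam * Sw θ - ν θ) - r2 θ / (2 * ν θ) + lam * Sw θ) -
          ((∑ n : Fin h, η n * Real.cos (((n : ℕ) + 1) * θ)) + η₀) - 1 / 2)) =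
        lam * (∫ θ in (-Real.pi)..Real.pi, (a θ ^ 2 + b θ ^ 2) * Sw θ) -
        (∫ θ in (-Real.pi)..Real.pi,
          (((∑ n : Fin h, η n * Real.cos (((n : ℕ) + 1) * θ)) + η₀) * a θ +
            (∑ n : Fin h, η n * Real.sin (((n : ℕ) + 1) * θ)) * b θ)) -
        (∫ θ in (-Real.pi)..Real.pi,
          ((1 / 2) * Real.log (2 * lam * Sw θ - ν θ) - r2 θ / (2 * ν θ) + lam * Sw θ)) -
        (∫ θ in (-Real.pi)..Real.pi,
          ((∑ n : Fin h, η n * Real.cos (((n : ℕ) + 1) * θ)) + η₀)) - Real.pi := by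
      rw [intervalIntegral.integral_sub (((ii1.sub ii2).sub ii3).sub ii4) ii5,
        intervalIntegral.integral_sub ((ii1.sub ii2).sub ii3) ii4,
        intervalIntegral.integral_sub (ii1.sub ii2) ii3,
        intervalIntegral.integral_sub ii1 ii2,
        intervalIntegral.integral_const_mul, intervalIntegral.integral_const]
      simp
      ring
    -- orthogonality: middle integral vanishes
    have hterm : ∀ n : Fin h, (∫ θ in (-Real.pi)..Real.pi,
        (a θ * Real.cos (((n : ℕ) + 1) * θ) + b θ * Real.sin (((n : ℕ) + 1) * θ))) = 0 := by
      intro n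
      have hle : (n : ℕ) + 1 ≤ h := n.2
      have := horth ((n : ℕ) + 1) hle
      push_cast at this
      exact this
    have ha0 : (∫ θ in (-Real.pi)..Real.pi, a θ) = 0 := by
      have h0 := horth 0 (Nat.zero_le h)
      simpa using h0
    have hacos : ∀ n : Fin h, IntegrableOn (fun θ => a θ * Real.cos (((n : ℕ) + 1) * θ))
        (Set.Icc (-Real.pi) Real.pi) := fun n => by
      simpa [mul_comm] using
        my_mul_int (F := fun θ => Real.cos (((n : ℕ) + 1) * θ)) (by fun_prop) haint
    have hbsin : ∀ n : Fin h, IntegrableOn (fun θ => b θ * Real.sin (((n : ℕ) + 1) * θ))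
        (Set.Icc (-Real.pi) Real.pi) := fun n => by
      simpa [mul_comm] using
        my_mul_int (F := fun θ => Real.sin (((n : ℕ) + 1) * θ)) (by fun_prop) hbint
    have hBrw : (fun θ =>
        (((∑ n : Fin h, η n * Real.cos (((n : ℕ) + 1) * θ)) + η₀) * a θ +
          (∑ n : Fin h, η n * Real.sin (((n : ℕ) + 1) * θ)) * b θ)) = (fun θ =>
        (∑ n : Fin h, η n * (a θ * Real.cos (((n : ℕ) + 1) * θ) +
          b θ * Real.sin (((n : ℕ) + 1) * θ))) + η₀ * a θ) := by
      funext θ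
      simp only [add_mul, Finset.sum_mul]
      rw [add_right_comm, ← Finset.sum_add_distrib]
      congr 1
      exact Finset.sum_congr rfl fun n _ => by ring
    have hBzero : (∫ θ in (-Real.pi)..Real.pi,
        (((∑ n : Fin h, η n * Real.cos (((n : ℕ) + 1) * θ)) + η₀) * a θ +
          (∑ n : Fin h, η n * Real.sin (((n : ℕ) + 1) * θ)) * b θ)) = 0 := by
      have hint_n : ∀ n : Fin h, IntegrableOn (fun θ =>
          η n * (a θ * Real.cos (((n : ℕ) + 1) * θ) + b θ * Real.sin (((n : ℕ) + 1) * θ)))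
          (Set.Icc (-Real.pi) Real.pi) := fun n => by
        have h1 : IntegrableOn (fun θ =>
            a θ * Real.cos (((n : ℕ) + 1) * θ) + b θ * Real.sin (((n : ℕ) + 1) * θ))
            (Set.Icc (-Real.pi) Real.pi) := by
          have := (hacos n).add (hbsin n)
          exact this
        exact h1.const_mul (η n)
      have hsumint : IntervalIntegrable (fun θ =>
          ∑ n : Fin h, η n * (a θ * Real.cos (((n : ℕ) + 1) * θ) +
            b θ * Real.sin (((n : ℕ) + 1) * θ))) volume (-Real.pi) Real.pi := by
        apply my_toII
        have := integrable_finset_sum (μ := volume.restrict (Set.Icc (-Real.pi) Real.pi))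
          Finset.univ (fun n _ => hint_n n)
        exact this
      have hμa : IntervalIntegrable (fun θ => η₀ * a θ) volume (-Real.pi) Real.pi :=
        my_toII (haint.const_mul η₀)
      rw [hBrw, intervalIntegral.integral_add hsumint hμa,
        intervalIntegral.integral_finset_sum (fun n _ => my_toII (hint_n n))]
      simp only [intervalIntegral.integral_const_mul, hterm, ha0, mul_zero,
        Finset.sum_const_zero, add_zero, zero_add]
    -- integral of c1
    have hc1int : (∫ θ in (-Real.pi)..Real.pi,
        ((∑ n : Fin h, η n * Real.cos (((n : ℕ) + 1) * θ)) + η₀)) = 2 * Real.pi * η₀ := by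
      rw [intervalIntegral.integral_add
        ((by fun_prop : Continuous (fun θ : ℝ =>
          ∑ n : Fin h, η n * Real.cos (((n : ℕ) + 1) * θ))).intervalIntegrable _ _)
        intervalIntegrable_const,
        intervalIntegral.integral_finset_sum (fun n _ =>
          (by fun_prop : Continuous (fun θ : ℝ =>
            η n * Real.cos (((n : ℕ) + 1) * θ))).intervalIntegrable _ _)]
      simp only [intervalIntegral.integral_const_mul, cos_int_zero, mul_zero,
        Finset.sum_const_zero, intervalIntegral.integral_const, zero_add, smul_eq_mul]
      ring
    -- power bound
    have hX : (∫ θ in (-Real.pi)..Real.pi, (a θ ^ 2 + b θ ^ 2) * Sw θ) ≤ 2 * Real.pi * P := by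
      have h2 : (∫ θ in (-Real.pi)..Real.pi, (a θ ^ 2 + b θ ^ 2) * Sw θ) =
          (2 * Real.pi) * ((1 / (2 * Real.pi)) *
            (∫ θ in (-Real.pi)..Real.pi, (a θ ^ 2 + b θ ^ 2) * Sw θ)) := by
        field_simp
      rw [h2]
      exact mul_le_mul_of_nonneg_left hpow (by positivity)
    have hlamX : lam * (∫ θ in (-Real.pi)..Real.pi, (a θ ^ 2 + b θ ^ 2) * Sw θ) ≤
        lam * (2 * Real.pi * P) := mul_le_mul_of_nonneg_left hX hlam.le
    -- put it together
    rw [hsplit, hBzero, hc1int] at hle1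
    rw [intervalIntegral.integral_const_mul] at hle1
    show (1 / (4 * Real.pi)) *
      (∫ θ in (-Real.pi)..Real.pi, Real.log ((1 + a θ) ^ 2 + b θ ^ 2)) ≤ -g
    rw [hg]
    have hM : (∫ θ in (-Real.pi)..Real.pi, Real.log ((1 + a θ) ^ 2 + b θ ^ 2)) ≤
        4 * Real.pi * lam * P - 2 * (∫ θ in (-Real.pi)..Real.pi,
          ((1 / 2) * Real.log (2 * lam * Sw θ - ν θ) - r2 θ / (2 * ν θ) + lam * Sw θ)) -
          4 * Real.pi * η₀ - 2 * Real.pi := by linarith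
    have hmul := mul_le_mul_of_nonneg_left hM
      (show (0 : ℝ) ≤ 1 / (4 * Real.pi) by positivity)
    have hrw : -((1 / (2 * Real.pi)) *
        (∫ θ in (-Real.pi)..Real.pi,
          ((1 / 2) * Real.log (2 * lam * Sw θ - ν θ) - r2 θ / (2 * ν θ) + lam * Sw θ)) -
          lam * P + η₀ + 1 / 2) =
        (1 / (4 * Real.pi)) * (4 * Real.pi * lam * P - 2 * (∫ θ in (-Real.pi)..Real.pi,
          ((1 / 2) * Real.log (2 * lam * Sw θ - ν θ) - r2 θ / (2 * ν θ) + lam * Sw θ)) -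
          4 * Real.pi * η₀ - 2 * Real.pi) := by
      field_simp
      ring
    rw [hrw]
    exact hmul
  refine ⟨main, ?_⟩
  have h0int : IntegrableOn (fun _ : ℝ => (0 : ℝ)) (Set.Icc (-Real.pi) Real.pi) :=
    integrableOn_const measure_Icc_lt_top.ne
  have hfeas0 : HFeasible Sw P h (fun _ => 0) (fun _ => 0) := by
    refine ⟨measurable_const, measurable_const, by simpa using h0int, by simpa using h0int,
      ?_, by simpa using h0int, ?_, ?_⟩
    · filter_upwards with θ; norm_num
    · have e : (∫ θ in (-Real.pi)..Real.pi,
          (((fun _ : ℝ => (0 : ℝ)) θ) ^ 2 + ((fun _ : ℝ => (0 : ℝ)) θ) ^ 2) * Sw θ) = 0 := by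
        simp
      rw [e, mul_zero]
      exact hP.le
    · intro n hn; simp
  have h00 : hObjective (fun _ => 0) (fun _ => 0) = 0 := by
    simp [hObjective]
  unfold Cfb
  apply Real.sSup_le
  · rintro x ⟨a, b, hf, rfl⟩
    exact main a b hf
  · have h1 := main _ _ hfeas0
    rw [h00] at h1
    exact h1
end
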